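/- For a labeled poset (P,ω) with fixed s ∈ P, the coefficient of q^m in (1 − q^p)·G_{P;s}(q) counts the (P,ω;s)-partitions g of size m with g(s) = 0, where p = |P|. Equivalently, (1−q^p)·G_{P;s}(q) = Σ_{g} q^{|g|} over (P,ω;s)-partitions g with g(s) = 0. -/
import Mathlib


open Finset Polynomial
open scoped Classical

/-- The set of linear extensions of a finite poset `P`, i.e. order-preserving
bijections `P ≃ Fin n`. -/
noncomputable def linExts (P : Type) [Fintype P] [PartialOrder P] (n : ℕ) :
    Finset (P ≃ Fin n) :=
  Finset.univ.filter fun f => ∀ x y : P, x ≤ y → f x ≤ f y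

/-- The word of a linear extension `f` with respect to the labeling `ω`. -/
def word {P : Type} {n : ℕ} (ω : P → ℕ) (f : P ≃ Fin n) : Fin n → ℕ :=
  fun i => ω (f.symm i)

/-- The major index of a word: the sum of the (1-indexed) descent positions. -/
def majW {n : ℕ} (w : Fin n → ℕ) : ℕ :=
  ∑ i : Fin n, if h : (i : ℕ) + 1 < n then
    (if w ⟨(i : ℕ) + 1, h⟩ < w i then (i : ℕ) + 1 else 0) else 0

/-- The number of inversions of a word. -/
noncomputable def invW {n : ℕ} (w : Fin n → ℕ) : ℕ :=
  ((Finset.univ : Finset (Fin n × Fin n)).filter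
    (fun p => p.1 < p.2 ∧ w p.2 < w p.1)).card

/-- Major index `q`-analogue of the number of linear extensions of `(P, ω)`. -/
noncomputable def eMaj (P : Type) [Fintype P] [PartialOrder P] (ω : P → ℕ) :
    Polynomial ℤ :=
  ∑ f ∈ linExts P (Fintype.card P), Polynomial.X ^ majW (word ω f)

/-- Inversion `q`-analogue of the number of linear extensions of `(P, ω)`. -/
noncomputable def eInv (P : Type) [Fintype P] [PartialOrder P] (ω : P → ℕ) :
    Polynomial ℤ :=
  ∑ f ∈ linExts P (Fintype.card P), Polynomial.X ^ invW (word ω f)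

/-- Major index `q`-analogue of linear extensions whose last letter is the label
of an element of `S`. -/
noncomputable def eMajEndIn (P : Type) [Fintype P] [PartialOrder P]
    (ω : P → ℕ) (S : Set P) : Polynomial ℤ :=
  ∑ f ∈ (linExts P (Fintype.card P)).filter (fun f => ∃ s ∈ S, ∀ x, f x ≤ f s),
    Polynomial.X ^ majW (word ω f)

/-- The Gaussian binomial coefficient `[n choose k]_q`, defined by the
`q`-Pascal recurrence. -/
noncomputable def qBinom : ℕ → ℕ → Polynomial ℤ
  | _, 0 => 1
  | 0, _ + 1 => 0
  | n + 1, k + 1 => qBinom n k + Polynomial.X ^ (k + 1) * qBinom n (k + 1)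

/-- `(P,ω)`-partition. -/
def IsPPart {α : Type} [PartialOrder α] (ω : α → ℕ) (f : α → ℕ) : Prop :=
  ∀ s t : α, s ≤ t → f t ≤ f s ∧ (ω t < ω s → f t < f s)

/-- `(P,ω;s)`-partition. -/
def IsPPartS {α : Type} [PartialOrder α] (ω : α → ℕ) (s : α) (f : α → ℕ) : Prop :=
  IsPPart ω f ∧ (∀ t, f s ≤ f t) ∧ ∀ t, t ≠ s → f s = f t → ω t < ω s

/-- Generating function by size for the maps `α → ℕ` satisfying `pred`. -/
noncomputable def GPart (α : Type) [Fintype α] (pred : (α → ℕ) → Prop) :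
    PowerSeries ℚ :=
  PowerSeries.mk fun m => (Set.ncard {f : α → ℕ | pred f ∧ ∑ t, f t = m} : ℚ)
section Aux

variable {P : Type} [Fintype P] [PartialOrder P] (ω : P → ℕ) (s : P)

private lemma pps_add_one {g : P → ℕ} (hg : IsPPartS ω s g) :
    IsPPartS ω s (fun t => g t + 1) := by
  obtain ⟨h1, h2, h3⟩ := hg
  refine ⟨fun a b hab => ?_, fun t => ?_, fun t ht he => ?_⟩
  · obtain ⟨hx, hy⟩ := h1 a b hab
    refine ⟨?_, fun hw => ?_⟩
    · show g b + 1 ≤ g a + 1; omega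
    · show g b + 1 < g a + 1; have := hy hw; omega
  · show g s + 1 ≤ g t + 1; have := h2 t; omega
  · have he' : g s + 1 = g t + 1 := he
    exact h3 t ht (by omega)

private lemma pps_sub_one {g : P → ℕ} (hg : IsPPartS ω s g) (h1s : 1 ≤ g s) :
    IsPPartS ω s (fun t => g t - 1) := by
  obtain ⟨h1, h2, h3⟩ := hg
  refine ⟨fun a b hab => ?_, fun t => ?_, fun t ht he => ?_⟩
  · obtain ⟨hx, hy⟩ := h1 a b hab
    have hb : 1 ≤ g b := le_trans h1s (h2 b)
    have ha : 1 ≤ g a := le_trans hb hx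
    refine ⟨?_, fun hw => ?_⟩
    · show g b - 1 ≤ g a - 1; omega
    · show g b - 1 < g a - 1; have := hy hw; omega
  · show g s - 1 ≤ g t - 1; have := le_trans h1s (h2 t); have := h2 t; omega
  · refine h3 t ht ?_
    have h1t : 1 ≤ g t := le_trans h1s (h2 t)
    have he' : g s - 1 = g t - 1 := he
    omega

private lemma fin_sum (m : ℕ) : {f : P → ℕ | ∑ t, f t = m}.Finite := by
  have : {f : P → ℕ | ∑ t, f t = m} ⊆ Set.pi Set.univ (fun _ => Set.Iic m) := by
    intro f hf t _
    simp only [Set.mem_Iic]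
    calc f t ≤ ∑ t, f t := Finset.single_le_sum (fun _ _ => Nat.zero_le _) (Finset.mem_univ t)
      _ = m := hf
  exact (Set.Finite.pi (fun _ => Set.finite_Iic m)).subset this

private lemma card_split (m : ℕ) (hm : Fintype.card P ≤ m) :
    Set.ncard {f : P → ℕ | IsPPartS ω s f ∧ ∑ t, f t = m} =
      Set.ncard {f : P → ℕ | (IsPPartS ω s f ∧ f s = 0) ∧ ∑ t, f t = m} +
      Set.ncard {f : P → ℕ | IsPPartS ω s f ∧ ∑ t, f t = m - Fintype.card P} := by
  classical
  set p := Fintype.card P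
  set A := {f : P → ℕ | IsPPartS ω s f ∧ ∑ t, f t = m}
  set B := {f : P → ℕ | (IsPPartS ω s f ∧ f s = 0) ∧ ∑ t, f t = m}
  set C := {f : P → ℕ | IsPPartS ω s f ∧ ∑ t, f t = m ∧ 1 ≤ f s}
  have hAfin : A.Finite := (fin_sum m).subset (fun f hf => hf.2)
  have hBfin : B.Finite := (fin_sum m).subset (fun f hf => hf.2)
  have hCfin : C.Finite := (fin_sum m).subset (fun f hf => hf.2.1)
  have hunion : A = B ∪ C := by
    ext f
    simp only [A, B, C, Set.mem_setOf_eq, Set.mem_union]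
    constructor
    · rintro ⟨hf, hs⟩
      rcases Nat.eq_zero_or_pos (f s) with h | h
      · exact Or.inl ⟨⟨hf, h⟩, hs⟩
      · exact Or.inr ⟨hf, hs, h⟩
    · rintro (⟨⟨hf, _⟩, hs⟩ | ⟨hf, hs, _⟩) <;> exact ⟨hf, hs⟩
  have hdisj : Disjoint B C := by
    rw [Set.disjoint_left]
    rintro f ⟨⟨_, h0⟩, _⟩ ⟨_, _, h1⟩
    omega
  -- bijection between C and A(m-p)
  have himg : (fun g t => g t - 1) '' C = {f : P → ℕ | IsPPartS ω s f ∧ ∑ t, f t = m - p} := by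
    ext h
    constructor
    · rintro ⟨g, ⟨hg, hsum, h1⟩, rfl⟩
      refine ⟨pps_sub_one ω s hg h1, ?_⟩
      have hall : ∀ t, 1 ≤ g t := fun t => le_trans h1 (hg.2.1 t)
      have : ∑ t, (g t - 1) + p = m := by
        rw [← hsum]
        have : ∑ t, g t = ∑ t, ((g t - 1) + 1) := by
          refine Finset.sum_congr rfl (fun t _ => ?_)
          have := hall t; omega
        rw [this, Finset.sum_add_distrib]
        have : (∑ _t : P, (1:ℕ)) = p := by simp [p]
        omega
      show ∑ t, (g t - 1) = m - p
      omega
    · rintro ⟨hh, hsum⟩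
      refine ⟨fun t => h t + 1, ⟨pps_add_one ω s hh, ?_, ?_⟩, ?_⟩
      · show ∑ t, (h t + 1) = m
        rw [Finset.sum_add_distrib]
        have h1 : (∑ _t : P, (1:ℕ)) = p := by simp [p]
        omega
      · show 1 ≤ h s + 1; omega
      · funext t; show h t + 1 - 1 = h t; omega
  have hinj : Set.InjOn (fun g (t : P) => g t - 1) C := by
    rintro g ⟨_, _, hg1⟩ g' ⟨hg', _, hg1'⟩ he
    funext t
    have h1 : 1 ≤ g t := le_trans hg1 ((by assumption : IsPPartS ω s g).2.1 t)
    have h2 : 1 ≤ g' t := le_trans hg1' (hg'.2.1 t)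
    have := congrFun he t
    simp only at this
    omega
  have hCcard : C.ncard = Set.ncard {f : P → ℕ | IsPPartS ω s f ∧ ∑ t, f t = m - p} := by
    rw [← himg, Set.ncard_image_of_injOn hinj]
  rw [hunion, Set.ncard_union_eq hdisj hBfin hCfin, hCcard]

end Aux

/-- `(1 - q^p)·G_{P;s}(q)` is the generating function for `(P,ω;s)`-partitions
`g` with `g(s) = 0`. -/
theorem one_sub_pow_mul_GPartS (P : Type) [Fintype P] [PartialOrder P]
    (ω : P → ℕ) (hinj : Function.Injective ω) (s : P) :
    (1 - (PowerSeries.X : PowerSeries ℚ) ^ Fintype.card P) *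
        GPart P (IsPPartS ω s) =
      GPart P (fun g => IsPPartS ω s g ∧ g s = 0) := by
  classical
  have hp : 1 ≤ Fintype.card P := Fintype.card_pos_iff.mpr ⟨s⟩
  set p := Fintype.card P
  ext m
  rw [sub_mul, one_mul, map_sub, mul_comm, PowerSeries.coeff_mul_X_pow']
  simp only [GPart, PowerSeries.coeff_mk]
  by_cases hm : p ≤ m
  · rw [if_pos hm]
    have key := card_split ω s m hm
    have hgs : Set.ncard {f : P → ℕ | IsPPartS ω s f ∧ ∑ t, f t = m}
        = Set.ncard {f : P → ℕ | (fun g => IsPPartS ω s g ∧ g s = 0) f ∧ ∑ t, f t = m}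
          + Set.ncard {f : P → ℕ | IsPPartS ω s f ∧ ∑ t, f t = m - p} := key
    rw [hgs]
    push_cast
    ring
  · rw [if_neg hm]
    rw [sub_zero]
    congr 1
    congr 1
    ext f
    simp only [Set.mem_setOf_eq]
    constructor
    · rintro ⟨hf, hs⟩
      refine ⟨⟨hf, ?_⟩, hs⟩
      by_contra h0
      have h1 : 1 ≤ f s := Nat.one_le_iff_ne_zero.mpr h0
      have hall : ∀ t, 1 ≤ f t := fun t => le_trans h1 (hf.2.1 t)
      have : p ≤ ∑ t, f t := by
        calc p = ∑ _t : P, 1 := by simp [p]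
          _ ≤ ∑ t, f t := Finset.sum_le_sum (fun t _ => hall t)
      omega
    · rintro ⟨⟨hf, _⟩, hs⟩
      exact ⟨hf, hs⟩
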